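/- Lindenbaum lemma for GTL: if Γ⊬Δ, then there exists a complete type Φ=(Φ⁺,Φ⁻) with Γ⊆Φ⁺ and Δ⊆Φ⁻. -/

import Mathlib

/-- Formulas of the Gödel temporal language. -/
inductive GF where
  | var : Nat → GF
  | and : GF → GF → GF
  | or : GF → GF → GF
  | imp : GF → GF → GF
  | coimp : GF → GF → GF
  | next : GF → GF
  | dia : GF → GF
  | box : GF → GF
deriving DecidableEq

/-- ⊥ := p ⇐ p -/
def GF.bot : GF := .coimp (.var 0) (.var 0)
/-- ⊤ := p ⇒ p -/
def GF.top : GF := .imp (.var 0) (.var 0)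
/-- ¬φ := φ ⇒ ⊥ -/
def GF.neg (φ : GF) : GF := .imp φ .bot
/-- φ ⟺ ψ := (φ⇒ψ) ∧ (ψ⇒φ) -/
def GF.iffF (φ ψ : GF) : GF := .and (.imp φ ψ) (.imp ψ φ)

/-- The deductive calculus GTL. Intuitionistic tautologies are generated by a
standard Hilbert-style axiomatization of intuitionistic propositional logic. -/
inductive GTL : GF → Prop where
  -- intuitionistic axioms
  | i1 (φ ψ : GF) : GTL (.imp φ (.imp ψ φ))
  | i2 (φ ψ χ : GF) : GTL (.imp (.imp φ (.imp ψ χ)) (.imp (.imp φ ψ) (.imp φ χ)))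
  | i3 (φ ψ : GF) : GTL (.imp (.and φ ψ) φ)
  | i4 (φ ψ : GF) : GTL (.imp (.and φ ψ) ψ)
  | i5 (φ ψ : GF) : GTL (.imp φ (.imp ψ (.and φ ψ)))
  | i6 (φ ψ : GF) : GTL (.imp φ (.or φ ψ))
  | i7 (φ ψ : GF) : GTL (.imp ψ (.or φ ψ))
  | i8 (φ ψ χ : GF) : GTL (.imp (.imp φ χ) (.imp (.imp ψ χ) (.imp (.or φ ψ) χ)))
  | i9 (φ : GF) : GTL (.imp .bot φ)
  -- H-B axioms and rules
  | hb1 (φ ψ : GF) : GTL (.imp φ (.or ψ (.coimp φ ψ)))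
  | hbMon {φ ψ : GF} (θ : GF) : GTL (.imp φ ψ) → GTL (.imp (.coimp φ θ) (.coimp ψ θ))
  | hbDis {φ ψ γ : GF} : GTL (.imp φ (.or ψ γ)) → GTL (.imp (.coimp φ ψ) γ)
  -- linearity axioms
  | lin (φ ψ : GF) : GTL (.or (.imp φ ψ) (.imp ψ φ))
  | colin (φ ψ : GF) : GTL (GF.neg (.and (.coimp φ ψ) (.coimp ψ φ)))
  -- temporal axioms
  | nBot : GTL (GF.neg (.next .bot))
  | nOr (φ ψ : GF) : GTL (.imp (.next (.or φ ψ)) (.or (.next φ) (.next ψ)))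
  | nAnd (φ ψ : GF) : GTL (.imp (.and (.next φ) (.next ψ)) (.next (.and φ ψ)))
  | nImp (φ ψ : GF) : GTL (GF.iffF (.next (.imp φ ψ)) (.imp (.next φ) (.next ψ)))
  | kBox (φ ψ : GF) : GTL (.imp (.box (.imp φ ψ)) (.imp (.box φ) (.box ψ)))
  | kDia (φ ψ : GF) : GTL (.imp (.box (.imp φ ψ)) (.imp (.dia φ) (.dia ψ)))
  | boxFix (φ : GF) : GTL (.imp (.box φ) (.and φ (.next (.box φ))))
  | diaFix (φ : GF) : GTL (.imp (.or φ (.next (.dia φ))) (.dia φ))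
  | indBox (φ : GF) : GTL (.imp (.box (.imp φ (.next φ))) (.imp φ (.box φ)))
  | indDia (φ : GF) : GTL (.imp (.box (.imp (.next φ) φ)) (.imp (.dia φ) φ))
  -- back–up confluence axiom
  | backup (φ ψ : GF) : GTL (.imp (.next (.coimp φ ψ)) (.coimp (.next φ) (.next ψ)))
  -- standard modal rules
  | mp {φ ψ : GF} : GTL φ → GTL (.imp φ ψ) → GTL ψ
  | necN {φ : GF} : GTL φ → GTL (.next φ)
  | necBox {φ : GF} : GTL φ → GTL (.box φ)

/-- Finite conjunction (⋀∅ = ⊤). -/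
def GF.conj : List GF → GF := fun l => l.foldr .and .top
/-- Finite disjunction (⋁∅ = ⊥). -/
def GF.disj : List GF → GF := fun l => l.foldr .or .bot

/-- Gentzen-style consequence: Γ ⊢ Δ iff ⋀Γ' ⇒ ⋁Δ' ∈ GTL for some finite
Γ' ⊆ Γ, Δ' ⊆ Δ. -/
def GSeq (Γ Δ : Set GF) : Prop :=
  ∃ l m : List GF, (∀ φ ∈ l, φ ∈ Γ) ∧ (∀ φ ∈ m, φ ∈ Δ) ∧
    GTL (.imp (GF.conj l) (GF.disj m))

/-- A complete type: a consistent saturated pair. -/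
def CompleteType (P N : Set GF) : Prop :=
  ¬ GSeq P N ∧ ∀ φ : GF, φ ∈ P ∨ φ ∈ N

/-- The canonical order: Φ ≤ Ψ iff Φ⁻ ⊆ Ψ⁻ and Φ⁺ ⊇ Ψ⁺. -/
def TLe (Φ Ψ : Set GF × Set GF) : Prop := Φ.2 ⊆ Ψ.2 ∧ Ψ.1 ⊆ Φ.1

/-- The canonical successor: S(Φ) = (⊖Φ⁺, ⊖Φ⁻). -/
def TSucc (Φ : Set GF × Set GF) : Set GF × Set GF :=
  ({φ | GF.next φ ∈ Φ.1}, {φ | GF.next φ ∈ Φ.2})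
/-! ### Auxiliary material for the Lindenbaum lemma -/

namespace LindenbaumAux

open GTL

/-- identity -/
theorem tid (φ : GF) : GTL (.imp φ φ) :=
  GTL.mp (GTL.i1 φ φ)
    (GTL.mp (GTL.i1 φ (.imp φ φ)) (GTL.i2 φ (.imp φ φ) φ))

theorem timp {ψ : GF} (h : GTL ψ) (φ : GF) : GTL (.imp φ ψ) :=
  GTL.mp h (GTL.i1 ψ φ)

theorem tS {A B C : GF} (h1 : GTL (.imp A (.imp B C))) (h2 : GTL (.imp A B)) :
    GTL (.imp A C) :=
  GTL.mp h2 (GTL.mp h1 (GTL.i2 A B C))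

theorem ttrans {A B C : GF} (h1 : GTL (.imp A B)) (h2 : GTL (.imp B C)) :
    GTL (.imp A C) :=
  tS (timp h2 A) h1

theorem tpair {A B C : GF} (h1 : GTL (.imp A B)) (h2 : GTL (.imp A C)) :
    GTL (.imp A (.and B C)) :=
  tS (ttrans h1 (GTL.i5 B C)) h2

theorem tcase {A B C : GF} (h1 : GTL (.imp A C)) (h2 : GTL (.imp B C)) :
    GTL (.imp (.or A B) C) :=
  GTL.mp h2 (GTL.mp h1 (GTL.i8 A B C))

theorem tunder {X Y : GF} (B : GF) (h : GTL (.imp X Y)) :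
    GTL (.imp (.imp B X) (.imp B Y)) :=
  GTL.mp (timp h B) (GTL.i2 B X Y)

theorem tcur {A B C : GF} (h : GTL (.imp (.and A B) C)) :
    GTL (.imp A (.imp B C)) :=
  ttrans (GTL.i5 A B) (tunder B h)

/-- Cut: from A ⇒ φ ∨ E and φ ∧ A ⇒ D conclude A ⇒ D ∨ E. -/
theorem tcut {A E D φ : GF} (h1 : GTL (.imp A (.or φ E)))
    (h2 : GTL (.imp (.and φ A) D)) : GTL (.imp A (.or D E)) := by
  have hφ : GTL (.imp φ (.imp A (.or D E))) :=
    ttrans (tcur h2) (tunder A (GTL.i6 D E))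
  have hE : GTL (.imp E (.imp A (.or D E))) :=
    ttrans (GTL.i7 D E) (GTL.i1 (.or D E) A)
  exact tS (ttrans h1 (tcase hφ hE)) (tid A)

theorem ttop : GTL GF.top := tid (.var 0)

theorem conj_imp_mem {φ : GF} : ∀ {l : List GF}, φ ∈ l → GTL (.imp (GF.conj l) φ)
  | a :: l, h => by
    rcases List.mem_cons.1 h with h | h
    · subst h; exact GTL.i3 _ _
    · exact ttrans (GTL.i4 a (GF.conj l)) (conj_imp_mem h)

theorem conj_mono : ∀ {l l' : List GF}, (∀ φ ∈ l, φ ∈ l') →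
    GTL (.imp (GF.conj l') (GF.conj l))
  | [], _, _ => timp ttop _
  | a :: l, l', h =>
    tpair (conj_imp_mem (h a (List.mem_cons_self (a := a) (l := l))))
      (conj_mono fun φ hφ => h φ (List.mem_cons_of_mem a hφ))

theorem mem_imp_disj {φ : GF} : ∀ {m : List GF}, φ ∈ m → GTL (.imp φ (GF.disj m))
  | a :: m, h => by
    rcases List.mem_cons.1 h with h | h
    · subst h; exact GTL.i6 _ _
    · exact ttrans (mem_imp_disj h) (GTL.i7 a (GF.disj m))

theorem disj_mono : ∀ {m m' : List GF}, (∀ φ ∈ m, φ ∈ m') →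
    GTL (.imp (GF.disj m) (GF.disj m'))
  | [], _, _ => GTL.i9 _
  | a :: m, m', h =>
    tcase (mem_imp_disj (h a (List.mem_cons_self (a := a) (l := m))))
      (disj_mono fun φ hφ => h φ (List.mem_cons_of_mem a hφ))

/-- Key step: a formula can consistently be added to one side. -/
theorem key {Γ Δ : Set GF} (h : ¬ GSeq Γ Δ) (φ : GF) :
    ¬ GSeq (insert φ Γ) Δ ∨ ¬ GSeq Γ (insert φ Δ) := by
  by_contra hc
  push_neg at hc
  obtain ⟨⟨l₁, m₁, hl₁, hm₁, hd₁⟩, ⟨l₂, m₂, hl₂, hm₂, hd₂⟩⟩ := hc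
  classical
  set l₁' := l₁.filter (· ≠ φ) with hl₁'def
  set m₂' := m₂.filter (· ≠ φ) with hm₂'def
  have hl₁'Γ : ∀ ψ ∈ l₁', ψ ∈ Γ := by
    intro ψ hψ
    have h1 := List.of_mem_filter hψ
    have h2 := List.mem_of_mem_filter hψ
    rcases hl₁ ψ h2 with h | h
    · simp at h1; exact absurd h h1
    · exact h
  have hm₂'Δ : ∀ ψ ∈ m₂', ψ ∈ Δ := by
    intro ψ hψ
    have h1 := List.of_mem_filter hψ
    have h2 := List.mem_of_mem_filter hψ
    rcases hm₂ ψ h2 with h | h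
    · simp at h1; exact absurd h h1
    · exact h
  set L := l₁' ++ l₂ with hLdef
  set A := GF.conj L with hAdef
  -- φ ∧ A ⇒ disj m₁
  have step1 : GTL (.imp (.and φ A) (GF.disj m₁)) := by
    have hsub : ∀ ψ ∈ l₁, ψ ∈ φ :: L := by
      intro ψ hψ
      by_cases hψφ : ψ = φ
      · exact hψφ ▸ List.mem_cons_self (a := φ) (l := L)
      · refine List.mem_cons_of_mem _ ?_
        refine List.mem_append_left _ ?_
        exact List.mem_filter.2 ⟨hψ, by simpa using hψφ⟩
    have : GTL (.imp (GF.conj (φ :: L)) (GF.conj l₁)) := conj_mono hsub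
    exact ttrans this hd₁
  -- A ⇒ φ ∨ disj m₂'
  have step2 : GTL (.imp A (.or φ (GF.disj m₂'))) := by
    have hsubl : ∀ ψ ∈ l₂, ψ ∈ L := fun ψ hψ => List.mem_append_right _ hψ
    have hsubm : ∀ ψ ∈ m₂, ψ ∈ φ :: m₂' := by
      intro ψ hψ
      by_cases hψφ : ψ = φ
      · exact hψφ ▸ List.mem_cons_self (a := φ) (l := m₂')
      · refine List.mem_cons_of_mem _ ?_
        exact List.mem_filter.2 ⟨hψ, by simpa using hψφ⟩
    exact ttrans (conj_mono hsubl) (ttrans hd₂ (disj_mono hsubm))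
  have hcut : GTL (.imp A (.or (GF.disj m₁) (GF.disj m₂'))) := tcut step2 step1
  have hfin : GTL (.imp A (GF.disj (m₁ ++ m₂'))) := by
    refine ttrans hcut (tcase ?_ ?_)
    · exact disj_mono fun ψ hψ => List.mem_append_left _ hψ
    · exact disj_mono fun ψ hψ => List.mem_append_right _ hψ
  exact h ⟨L, m₁ ++ m₂',
    fun ψ hψ => (List.mem_append.1 hψ).elim (hl₁'Γ ψ) (hl₂ ψ),
    fun ψ hψ => (List.mem_append.1 hψ).elim (hm₁ ψ) (hm₂'Δ ψ), hfin⟩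

/-- An injective coding of formulas. -/
def enc : GF → ℕ
  | .var n => Nat.pair 0 n
  | .and a b => Nat.pair 1 (Nat.pair (enc a) (enc b))
  | .or a b => Nat.pair 2 (Nat.pair (enc a) (enc b))
  | .imp a b => Nat.pair 3 (Nat.pair (enc a) (enc b))
  | .coimp a b => Nat.pair 4 (Nat.pair (enc a) (enc b))
  | .next a => Nat.pair 5 (enc a)
  | .dia a => Nat.pair 6 (enc a)
  | .box a => Nat.pair 7 (enc a)

theorem enc_inj : Function.Injective enc := by
  intro a
  induction a with
  | var n => intro b h; cases b <;> simp [enc, Nat.pair_eq_pair] at h <;> simp [h]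
  | and a b iha ihb => intro c h; cases c <;> simp [enc, Nat.pair_eq_pair] at h
                       · exact congrArg₂ _ (iha h.1) (ihb h.2)
  | or a b iha ihb => intro c h; cases c <;> simp [enc, Nat.pair_eq_pair] at h
                      · exact congrArg₂ _ (iha h.1) (ihb h.2)
  | imp a b iha ihb => intro c h; cases c <;> simp [enc, Nat.pair_eq_pair] at h
                       · exact congrArg₂ _ (iha h.1) (ihb h.2)
  | coimp a b iha ihb => intro c h; cases c <;> simp [enc, Nat.pair_eq_pair] at h
                         · exact congrArg₂ _ (iha h.1) (ihb h.2)
  | next a iha => intro c h; cases c <;> simp [enc, Nat.pair_eq_pair] at h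
                  · exact congrArg _ (iha h)
  | dia a iha => intro c h; cases c <;> simp [enc, Nat.pair_eq_pair] at h
                 · exact congrArg _ (iha h)
  | box a iha => intro c h; cases c <;> simp [enc, Nat.pair_eq_pair] at h
                 · exact congrArg _ (iha h)

instance : Countable GF := ⟨⟨enc, enc_inj⟩⟩

instance : Nonempty GF := ⟨.var 0⟩

end LindenbaumAux
namespace LindenbaumAux

open scoped Classical in
/-- Stages of the Lindenbaum construction. -/
noncomputable def stage (Γ Δ : Set GF) (e : ℕ → GF) : ℕ → Set GF × Set GF
  | 0 => (Γ, Δ)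
  | n+1 =>
    let Φ := stage Γ Δ e n
    if ¬ GSeq (insert (e n) Φ.1) Φ.2 then (insert (e n) Φ.1, Φ.2)
    else (Φ.1, insert (e n) Φ.2)

theorem stage_cons {Γ Δ : Set GF} (e : ℕ → GF) (h : ¬ GSeq Γ Δ) :
    ∀ n, ¬ GSeq (stage Γ Δ e n).1 (stage Γ Δ e n).2
  | 0 => h
  | n+1 => by
    classical
    have ih := stage_cons e h n
    by_cases hc : ¬ GSeq (insert (e n) (stage Γ Δ e n).1) (stage Γ Δ e n).2
    · simp only [stage, hc, if_true]; exact hc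
    · simp only [stage, hc, if_false]
      rcases key ih (e n) with hk | hk
      · exact absurd hk hc
      · exact hk

theorem stage_mono_succ (Γ Δ : Set GF) (e : ℕ → GF) (n : ℕ) :
    (stage Γ Δ e n).1 ⊆ (stage Γ Δ e (n+1)).1 ∧
      (stage Γ Δ e n).2 ⊆ (stage Γ Δ e (n+1)).2 := by
  classical
  by_cases hc : ¬ GSeq (insert (e n) (stage Γ Δ e n).1) (stage Γ Δ e n).2
  · simp only [stage, hc, if_true]
    exact ⟨Set.subset_insert _ _, subset_rfl⟩
  · simp only [stage, hc, if_false]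
    exact ⟨subset_rfl, Set.subset_insert _ _⟩

theorem stage_mono (Γ Δ : Set GF) (e : ℕ → GF) {m n : ℕ} (hmn : m ≤ n) :
    (stage Γ Δ e m).1 ⊆ (stage Γ Δ e n).1 ∧
      (stage Γ Δ e m).2 ⊆ (stage Γ Δ e n).2 := by
  induction n with
  | zero => cases Nat.le_zero.1 hmn; exact ⟨subset_rfl, subset_rfl⟩
  | succ n ih =>
    rcases Nat.lt_or_ge m (n+1) with h' | h'
    · have := ih (Nat.lt_succ_iff.1 h')
      exact ⟨this.1.trans (stage_mono_succ Γ Δ e n).1,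
             this.2.trans (stage_mono_succ Γ Δ e n).2⟩
    · cases Nat.le_antisymm hmn h'; exact ⟨subset_rfl, subset_rfl⟩

theorem list_bound (s : ℕ → Set GF) (hs : ∀ {m n : ℕ}, m ≤ n → s m ⊆ s n) :
    ∀ l : List GF, (∀ φ ∈ l, φ ∈ ⋃ n, s n) → ∃ n, ∀ φ ∈ l, φ ∈ s n
  | [], _ => ⟨0, by simp⟩
  | a :: l, h => by
    obtain ⟨n, hn⟩ := list_bound s hs l fun φ hφ => h φ (List.mem_cons_of_mem a hφ)
    obtain ⟨_, ⟨k, rfl⟩, hk⟩ := h a (List.mem_cons_self (a := a) (l := l))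
    refine ⟨max k n, fun φ hφ => ?_⟩
    rcases List.mem_cons.1 hφ with rfl | hφ
    · exact hs (le_max_left k n) hk
    · exact hs (le_max_right k n) (hn φ hφ)

end LindenbaumAux

open LindenbaumAux

/-- Lindenbaum lemma: if Γ ⊬ Δ then some complete type extends (Γ,Δ). -/
theorem stmt14 (Γ Δ : Set GF) (h : ¬ GSeq Γ Δ) :
    ∃ P N : Set GF, CompleteType P N ∧ Γ ⊆ P ∧ Δ ⊆ N := by
  classical
  obtain ⟨e, he⟩ := exists_surjective_nat GF
  refine ⟨⋃ n, (stage Γ Δ e n).1, ⋃ n, (stage Γ Δ e n).2, ⟨?_, ?_⟩, ?_, ?_⟩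
  · rintro ⟨l, m, hl, hm, hd⟩
    obtain ⟨n₁, hn₁⟩ := list_bound (fun n => (stage Γ Δ e n).1)
      (fun hmn => (stage_mono Γ Δ e hmn).1) l hl
    obtain ⟨n₂, hn₂⟩ := list_bound (fun n => (stage Γ Δ e n).2)
      (fun hmn => (stage_mono Γ Δ e hmn).2) m hm
    refine stage_cons e h (max n₁ n₂) ⟨l, m, ?_, ?_, hd⟩
    · exact fun φ hφ => (stage_mono Γ Δ e (le_max_left n₁ n₂)).1 (hn₁ φ hφ)
    · exact fun φ hφ => (stage_mono Γ Δ e (le_max_right n₁ n₂)).2 (hn₂ φ hφ)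
  · intro φ
    obtain ⟨n, rfl⟩ := he φ
    by_cases hc : ¬ GSeq (insert (e n) (stage Γ Δ e n).1) (stage Γ Δ e n).2
    · left
      exact Set.mem_iUnion.2 ⟨n+1, by simp only [stage, hc, if_true]; exact Set.mem_insert _ _⟩
    · right
      exact Set.mem_iUnion.2 ⟨n+1, by simp only [stage, hc, if_false]; exact Set.mem_insert _ _⟩
  · exact fun φ hφ => Set.mem_iUnion.2 ⟨0, hφ⟩
  · exact fun φ hφ => Set.mem_iUnion.2 ⟨0, hφ⟩
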